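/- The explicit functions ξ(t) = √3·(e^{2t/√3} + 1)/(e^{2t/√3} − 1), L(t) = (1/√3)·(e^{2t/√3} + 1)/(e^{2t/√3} − 1), and R(t) = (2/√3)·e^{t/√3}/(e^{2t/√3} − 1), defined for t ∈ (0,∞), solve the SO(4)-invariant expander system and satisfy the boundary conditions at 0 with parameter α = 0. -/

import Mathlib

open Set Filter
open Topology

/-- The SO(4)-invariant expander system on `(0,∞)`:
`ξ' = 1 − 3L²`, `R' = −R·L`, `L' = 1 − ξ·L + 2R²`. -/
def SO4System (ξ L R : ℝ → ℝ) : Prop :=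
  ∀ t ∈ Ioi (0 : ℝ),
    HasDerivAt ξ (1 - 3 * (L t) ^ 2) t ∧
    HasDerivAt R (-(R t) * L t) t ∧
    HasDerivAt L (1 - ξ t * L t + 2 * (R t) ^ 2) t

/-- Boundary conditions at `0` with parameter `α` for the SO(4)-invariant
expander system: `ξ − 3/t`, `L − 1/t` and `R − 1/t` extend to `C¹` functions on
`[0,∞)` vanishing at `0` with derivatives `(1+2α)/3`, `(1−α)/9`, `(α−1)/18`. -/
def SO4BC (α : ℝ) (ξ L R : ℝ → ℝ) : Prop :=
  (∃ g : ℝ → ℝ, ContDiffOn ℝ 1 g (Ici 0) ∧ (∀ t ∈ Ioi (0 : ℝ), g t = ξ t - 3 / t) ∧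
      g 0 = 0 ∧ derivWithin g (Ici 0) 0 = (1 + 2 * α) / 3) ∧
  (∃ g : ℝ → ℝ, ContDiffOn ℝ 1 g (Ici 0) ∧ (∀ t ∈ Ioi (0 : ℝ), g t = L t - 1 / t) ∧
      g 0 = 0 ∧ derivWithin g (Ici 0) 0 = (1 - α) / 9) ∧
  (∃ g : ℝ → ℝ, ContDiffOn ℝ 1 g (Ici 0) ∧ (∀ t ∈ Ioi (0 : ℝ), g t = R t - 1 / t) ∧
      g 0 = 0 ∧ derivWithin g (Ici 0) 0 = (α - 1) / 18)

/-- The explicit hyperbolic (`α = 0`) solution of the SO(4)-invariant expander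
system. -/
noncomputable def ξH : ℝ → ℝ := fun t =>
  Real.sqrt 3 * (Real.exp (2 * t / Real.sqrt 3) + 1) / (Real.exp (2 * t / Real.sqrt 3) - 1)

noncomputable def LH : ℝ → ℝ := fun t =>
  (1 / Real.sqrt 3) *
    (Real.exp (2 * t / Real.sqrt 3) + 1) / (Real.exp (2 * t / Real.sqrt 3) - 1)

noncomputable def RH : ℝ → ℝ := fun t =>
  (2 / Real.sqrt 3) * Real.exp (t / Real.sqrt 3) / (Real.exp (2 * t / Real.sqrt 3) - 1)


noncomputable def eps : ℝ → ℝ := fun s => (Real.exp s - (1 + s + s^2/2 + s^3/6)) / s^3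

lemma exp_eq_eps {s : ℝ} (hs : s ≠ 0) :
    Real.exp s = 1 + s + s^2/2 + s^3/6 + s^3 * eps s := by
  unfold eps; field_simp <;> ring

lemma eps_tendsto : Tendsto eps (𝓝[>] (0:ℝ)) (𝓝 0) := by
  have hb : ∀ s ∈ Ioc (0:ℝ) 1, ‖eps s‖ ≤ 5/96 * s := by
    intro s hs
    have h1 : |s| ≤ 1 := by rw [abs_of_pos hs.1]; exact hs.2
    have := Real.exp_bound h1 (n := 4) (by norm_num)
    have hsum : ∑ m ∈ Finset.range 4, s ^ m / m.factorial = 1 + s + s^2/2 + s^3/6 := by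
      simp [Finset.sum_range_succ, Nat.factorial]
    rw [hsum] at this
    have hs3 : |s|^3 = s^3 := by rw [abs_of_pos hs.1]
    have : |Real.exp s - (1 + s + s^2/2 + s^3/6)| ≤ s^4 * (5/96) := by
      calc |Real.exp s - (1 + s + s^2/2 + s^3/6)| ≤ |s|^4 * (5/(24*4)) := by
            convert this using 2 <;> norm_num
        _ = s^4 * (5/96) := by rw [abs_of_pos hs.1]; norm_num
    rw [Real.norm_eq_abs]
    have hs3' : (0:ℝ) < s^3 := pow_pos hs.1 3
    unfold eps
    rw [abs_div, abs_of_pos hs3', div_le_iff₀ hs3']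
    calc |Real.exp s - (1 + s + s^2/2 + s^3/6)| ≤ s^4 * (5/96) := this
      _ = 5/96 * s * s^3 := by ring
  have hmem : Ioc (0:ℝ) 1 ∈ 𝓝[>] (0:ℝ) := Ioc_mem_nhdsGT_of_mem (by norm_num [mem_Ico])
  refine squeeze_zero_norm' (a := fun s => 5/96 * s) ?_ ?_
  · filter_upwards [hmem] with s hs using hb s hs
  · have : Tendsto (fun s : ℝ => 5/96 * s) (𝓝[>] 0) (𝓝 (5/96 * 0)) :=
      (tendsto_id.const_mul _).mono_left nhdsWithin_le_nhds
    simpa using this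
noncomputable def qq : ℝ → ℝ → ℝ := fun s e =>
  (2 : ℝ) + (2 : ℝ) * s + (4/3 : ℝ) * s^2 + (2 : ℝ) * s^2 * e + (7/12 : ℝ) * s^3 + (2 : ℝ) *
    s^3 * e + (1/6 : ℝ) * s^4 + (1 : ℝ) * s^4 * e + (1/36 : ℝ) * s^5 + (1/3 : ℝ) * s^5 * e + (1
    : ℝ) * s^5 * e^2

noncomputable def num1 : ℝ → ℝ → ℝ := fun s e =>
  (2/3 : ℝ) + (-2 : ℝ) * e + (3/4 : ℝ) * s + (5/12 : ℝ) * s^2 + (1 : ℝ) * s^2 * e + (5/36 : ℝ)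
    * s^3 + (2/3 : ℝ) * s^3 * e + (-1 : ℝ) * s^3 * e^2 + (1/36 : ℝ) * s^4 + (1/3 : ℝ) * s^4 * e
    + (1 : ℝ) * s^4 * e^2

noncomputable def num2 : ℝ → ℝ → ℝ := fun s e =>
  (-8/3 : ℝ) + (8 : ℝ) * e + (-17/3 : ℝ) * s + (8 : ℝ) * s * e + (-62/9 : ℝ) * s^2 + (4/3 : ℝ)
    * s^2 * e + (4 : ℝ) * s^2 * e^2 + (-6 : ℝ) * s^3 + (-7 : ℝ) * s^3 * e + (12 : ℝ) * s^3 *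
    e^2 + (-575/144 : ℝ) * s^4 + (-35/3 : ℝ) * s^4 * e + (4 : ℝ) * s^4 * e^2 + (-223/108 : ℝ) *
    s^5 + (-61/6 : ℝ) * s^5 * e + (-4 : ℝ) * s^5 * e^2 + (4 : ℝ) * s^5 * e^3 + (-361/432 : ℝ) *
    s^6 + (-37/6 : ℝ) * s^6 * e + (-17/2 : ℝ) * s^6 * e^2 + (4 : ℝ) * s^6 * e^3 + (-7/27 : ℝ) *
    s^7 + (-8/3 : ℝ) * s^7 * e + (-7 : ℝ) * s^7 * e^2 + (-2 : ℝ) * s^7 * e^3 + (-77/1296 : ℝ) *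
    s^8 + (-22/27 : ℝ) * s^8 * e + (-10/3 : ℝ) * s^8 * e^2 + (-10/3 : ℝ) * s^8 * e^3 + (1 : ℝ)
    * s^8 * e^4 + (-1/108 : ℝ) * s^9 + (-1/6 : ℝ) * s^9 * e + (-1 : ℝ) * s^9 * e^2 + (-2 : ℝ) *
    s^9 * e^3 + (-1/1296 : ℝ) * s^10 + (-1/54 : ℝ) * s^10 * e + (-1/6 : ℝ) * s^10 * e^2 + (-2/3
    : ℝ) * s^10 * e^3 + (-1 : ℝ) * s^10 * e^4

noncomputable def num4 : ℝ → ℝ → ℝ := fun s e =>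
  (-32/3 : ℝ) + (8 : ℝ) * e + (-65/3 : ℝ) * s + (8 : ℝ) * s * e + (-230/9 : ℝ) * s^2 + (-44/3 :
    ℝ) * s^2 * e + (4 : ℝ) * s^2 * e^2 + (-64/3 : ℝ) * s^3 + (-39 : ℝ) * s^3 * e + (12 : ℝ) *
    s^3 * e^2 + (-1951/144 : ℝ) * s^4 + (-139/3 : ℝ) * s^4 * e + (-4 : ℝ) * s^4 * e^2 +
    (-727/108 : ℝ) * s^5 + (-217/6 : ℝ) * s^5 * e + (-28 : ℝ) * s^5 * e^2 + (4 : ℝ) * s^5 * e^3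
    + (-1135/432 : ℝ) * s^6 + (-121/6 : ℝ) * s^6 * e + (-65/2 : ℝ) * s^6 * e^2 + (4 : ℝ) * s^6
    * e^3 + (-43/54 : ℝ) * s^7 + (-25/3 : ℝ) * s^7 * e + (-23 : ℝ) * s^7 * e^2 + (-10 : ℝ) *
    s^7 * e^3 + (-233/1296 : ℝ) * s^8 + (-67/27 : ℝ) * s^8 * e + (-31/3 : ℝ) * s^8 * e^2 +
    (-34/3 : ℝ) * s^8 * e^3 + (1 : ℝ) * s^8 * e^4 + (-1/36 : ℝ) * s^9 + (-1/2 : ℝ) * s^9 * e +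
    (-3 : ℝ) * s^9 * e^2 + (-6 : ℝ) * s^9 * e^3 + (-1/432 : ℝ) * s^10 + (-1/18 : ℝ) * s^10 * e
    + (-1/2 : ℝ) * s^10 * e^2 + (-2 : ℝ) * s^10 * e^3 + (-3 : ℝ) * s^10 * e^4

noncomputable def num5 : ℝ → ℝ → ℝ := fun s e =>
  (-1/3 : ℝ) + (-2 : ℝ) * e + (-1/4 : ℝ) * s + (-1/6 : ℝ) * s^2 + (-1 : ℝ) * s^2 * e + (-1/36 :
    ℝ) * s^3 + (-1/3 : ℝ) * s^3 * e + (-1 : ℝ) * s^3 * e^2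

noncomputable def num6 : ℝ → ℝ → ℝ := fun s e =>
  (-2/3 : ℝ) + (8 : ℝ) * e + (-5/3 : ℝ) * s + (8 : ℝ) * s * e + (-31/18 : ℝ) * s^2 + (16/3 : ℝ)
    * s^2 * e + (4 : ℝ) * s^2 * e^2 + (-7/6 : ℝ) * s^3 + (1 : ℝ) * s^3 * e + (12 : ℝ) * s^3 *
    e^2 + (-25/48 : ℝ) * s^4 + (-1 : ℝ) * s^4 * e + (6 : ℝ) * s^4 * e^2 + (-4/27 : ℝ) * s^5 +
    (-2/3 : ℝ) * s^5 * e + (2 : ℝ) * s^5 * e^2 + (4 : ℝ) * s^5 * e^3 + (-5/216 : ℝ) * s^6 +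
    (-1/6 : ℝ) * s^6 * e + (1/2 : ℝ) * s^6 * e^2 + (4 : ℝ) * s^6 * e^3 + (1/1296 : ℝ) * s^8 +
    (1/54 : ℝ) * s^8 * e + (1/6 : ℝ) * s^8 * e^2 + (2/3 : ℝ) * s^8 * e^3 + (1 : ℝ) * s^8 * e^4

lemma hq {s : ℝ} (hs : s ≠ 0) : s * qq s (eps s) = Real.exp (2*s) - 1 := by
  rw [show Real.exp (2*s) = Real.exp s * Real.exp s from by rw [two_mul, Real.exp_add], exp_eq_eps hs]; unfold qq; ring

lemma hnum1 {s : ℝ} (hs : s ≠ 0) :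
    s^3 * num1 s (eps s) = s * (Real.exp (2*s) + 1) - (Real.exp (2*s) - 1) := by
  rw [show Real.exp (2*s) = Real.exp s * Real.exp s from by rw [two_mul, Real.exp_add], exp_eq_eps hs]; unfold num1; ring

lemma hnum2 {s : ℝ} (hs : s ≠ 0) :
    s^2 * num2 s (eps s) = (qq s (eps s))^2 - (Real.exp (2*s) + 1)^2 := by
  rw [show Real.exp (2*s) = Real.exp s * Real.exp s from by rw [two_mul, Real.exp_add], exp_eq_eps hs]; unfold num2 qq; ring

lemma hnum4 {s : ℝ} (hs : s ≠ 0) :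
    s^2 * num4 s (eps s) = 8 * Real.exp (2*s) - 3 * (Real.exp (2*s) + 1)^2 + (qq s (eps s))^2 := by
  rw [show Real.exp (2*s) = Real.exp s * Real.exp s from by rw [two_mul, Real.exp_add], exp_eq_eps hs]; unfold num4 qq; ring

lemma hnum5 {s : ℝ} (hs : s ≠ 0) :
    s^2 * num5 s (eps s) = 2 * Real.exp s - qq s (eps s) := by
  rw [exp_eq_eps hs]; unfold num5 qq; ring

lemma hnum6 {s : ℝ} (hs : s ≠ 0) :
    s^2 * num6 s (eps s) = (qq s (eps s))^2 - 2 * Real.exp s * (Real.exp (2*s) + 1) := by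
  rw [show Real.exp (2*s) = Real.exp s * Real.exp s from by rw [two_mul, Real.exp_add], exp_eq_eps hs]; unfold num6 qq; ring

lemma exp2_gt_one {s : ℝ} (hs : 0 < s) : 1 < Real.exp (2*s) := by
  rw [show (1:ℝ) = Real.exp 0 from (Real.exp_zero).symm]
  exact Real.exp_lt_exp.mpr (by linarith)

lemma qq_ne {s : ℝ} (hs : 0 < s) : qq s (eps s) ≠ 0 := by
  intro h
  have h2 := hq hs.ne'
  rw [h, mul_zero] at h2
  have := exp2_gt_one hs
  linarith

lemma tendsto_pair : Tendsto (fun s => (s, eps s)) (𝓝[>] (0:ℝ)) (𝓝 (0, 0)) :=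
  (tendsto_id.mono_left nhdsWithin_le_nhds).prodMk_nhds eps_tendsto

lemma tendsto_comp2 (f : ℝ → ℝ → ℝ) (hf : Continuous fun p : ℝ × ℝ => f p.1 p.2) :
    Tendsto (fun s => f s (eps s)) (𝓝[>] (0:ℝ)) (𝓝 (f 0 0)) :=
  (hf.tendsto (0, 0)).comp tendsto_pair

lemma tendsto_qq : Tendsto (fun s => qq s (eps s)) (𝓝[>] (0:ℝ)) (𝓝 2) := by
  have := tendsto_comp2 qq (by unfold qq; fun_prop)
  norm_num [qq] at this ⊢
  exact this

lemma K1 : Tendsto (fun s => ((Real.exp (2*s) + 1)/(Real.exp (2*s) - 1) - 1/s)/s)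
    (𝓝[>] (0:ℝ)) (𝓝 (1/3)) := by
  have hn : Tendsto (fun s => num1 s (eps s)) (𝓝[>] (0:ℝ)) (𝓝 (2/3)) := by
    have := tendsto_comp2 num1 (by unfold num1; fun_prop)
    norm_num [num1] at this ⊢
    exact this
  have h := hn.div tendsto_qq (by norm_num)
  rw [show ((2:ℝ)/3)/2 = 1/3 from by norm_num] at h
  refine Tendsto.congr' ?_ h
  filter_upwards [self_mem_nhdsWithin] with s hs
  have hs' : s ≠ 0 := ne_of_gt hs
  have hE1 : Real.exp (2*s) - 1 ≠ 0 := by have := exp2_gt_one hs; linarith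
  have h2 := hq hs'
  have e1 : ((Real.exp (2*s) + 1)/(Real.exp (2*s) - 1) - 1/s)/s
      = (s * (Real.exp (2*s) + 1) - (Real.exp (2*s) - 1))/(s^2 * (Real.exp (2*s) - 1)) := by
    field_simp <;> ring
  have ha : s * (Real.exp (2*s) + 1) - (Real.exp (2*s) - 1) = s^3 * num1 s (eps s) :=
    (hnum1 hs').symm
  have hb : s^2 * (Real.exp (2*s) - 1) = s^3 * qq s (eps s) := by rw [← h2]; ring
  rw [e1, ha, hb, mul_div_mul_left _ _ (pow_ne_zero 3 hs')]
  all_goals rfl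

lemma K2 : Tendsto (fun s => 1/s^2 - (Real.exp (2*s) + 1)^2/(Real.exp (2*s) - 1)^2)
    (𝓝[>] (0:ℝ)) (𝓝 (-2/3)) := by
  have hn : Tendsto (fun s => num2 s (eps s)) (𝓝[>] (0:ℝ)) (𝓝 (-8/3)) := by
    have := tendsto_comp2 num2 (by unfold num2; fun_prop)
    norm_num [num2] at this ⊢
    exact this
  have h := hn.div (tendsto_qq.pow 2) (by norm_num)
  rw [show ((-8:ℝ)/3)/2^2 = -2/3 from by norm_num] at h
  refine Tendsto.congr' ?_ h
  filter_upwards [self_mem_nhdsWithin] with s hs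
  have hs' : s ≠ 0 := ne_of_gt hs
  have hE1 : Real.exp (2*s) - 1 ≠ 0 := by have := exp2_gt_one hs; linarith
  have h2 := hq hs'
  have e1 : 1/s^2 - (Real.exp (2*s) + 1)^2/(Real.exp (2*s) - 1)^2
      = ((Real.exp (2*s) - 1)^2 - s^2 * (Real.exp (2*s) + 1)^2)/(s^2 * (Real.exp (2*s) - 1)^2) := by
    rw [div_sub_div _ _ (pow_ne_zero 2 hs') (pow_ne_zero 2 hE1)]; ring
  have ha : (Real.exp (2*s) - 1)^2 - s^2 * (Real.exp (2*s) + 1)^2 = s^4 * num2 s (eps s) := by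
    rw [← h2]; linear_combination (-s^2) * hnum2 hs'
  have hb : s^2 * (Real.exp (2*s) - 1)^2 = s^4 * (qq s (eps s))^2 := by rw [← h2]; ring
  rw [e1, ha, hb, mul_div_mul_left _ _ (pow_ne_zero 4 hs')]
  all_goals rfl

lemma K4 : Tendsto (fun s => (8 * Real.exp (2*s) - 3 * (Real.exp (2*s) + 1)^2)/(3 * (Real.exp (2*s) - 1)^2)
      + 1/(3*s^2)) (𝓝[>] (0:ℝ)) (𝓝 (-8/9)) := by
  have hn : Tendsto (fun s => num4 s (eps s)) (𝓝[>] (0:ℝ)) (𝓝 (-32/3)) := by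
    have := tendsto_comp2 num4 (by unfold num4; fun_prop)
    norm_num [num4] at this ⊢
    exact this
  have h := hn.div ((tendsto_qq.pow 2).const_mul 3) (by norm_num)
  rw [show ((-32:ℝ)/3)/(3 * 2^2) = -8/9 from by norm_num] at h
  refine Tendsto.congr' ?_ h
  filter_upwards [self_mem_nhdsWithin] with s hs
  have hs' : s ≠ 0 := ne_of_gt hs
  have hE1 : Real.exp (2*s) - 1 ≠ 0 := by have := exp2_gt_one hs; linarith
  have h2 := hq hs'
  have e1 : (8 * Real.exp (2*s) - 3 * (Real.exp (2*s) + 1)^2)/(3 * (Real.exp (2*s) - 1)^2) + 1/(3*s^2)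
      = (s^2 * (8 * Real.exp (2*s) - 3 * (Real.exp (2*s) + 1)^2) + (Real.exp (2*s) - 1)^2)
        /(s^2 * (3 * (Real.exp (2*s) - 1)^2)) := by
    field_simp <;> ring
  have ha : s^2 * (8 * Real.exp (2*s) - 3 * (Real.exp (2*s) + 1)^2) + (Real.exp (2*s) - 1)^2
      = s^4 * num4 s (eps s) := by
    rw [← h2]; linear_combination (-s^2) * hnum4 hs'
  have hb : s^2 * (3 * (Real.exp (2*s) - 1)^2) = s^4 * (3 * (qq s (eps s))^2) := by rw [← h2]; ring
  rw [e1, ha, hb, mul_div_mul_left _ _ (pow_ne_zero 4 hs')]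
  all_goals rfl

lemma K5 : Tendsto (fun s => (2 * Real.exp s/(Real.exp (2*s) - 1) - 1/s)/s)
    (𝓝[>] (0:ℝ)) (𝓝 (-1/6)) := by
  have hn : Tendsto (fun s => num5 s (eps s)) (𝓝[>] (0:ℝ)) (𝓝 (-1/3)) := by
    have := tendsto_comp2 num5 (by unfold num5; fun_prop)
    norm_num [num5] at this ⊢
    exact this
  have h := hn.div tendsto_qq (by norm_num)
  rw [show ((-1:ℝ)/3)/2 = -1/6 from by norm_num] at h
  refine Tendsto.congr' ?_ h
  filter_upwards [self_mem_nhdsWithin] with s hs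
  have hs' : s ≠ 0 := ne_of_gt hs
  have hE1 : Real.exp (2*s) - 1 ≠ 0 := by have := exp2_gt_one hs; linarith
  have h2 := hq hs'
  have e1 : (2 * Real.exp s/(Real.exp (2*s) - 1) - 1/s)/s
      = (s * (2 * Real.exp s) - (Real.exp (2*s) - 1))/(s^2 * (Real.exp (2*s) - 1)) := by
    field_simp <;> ring
  have ha : s * (2 * Real.exp s) - (Real.exp (2*s) - 1) = s^3 * num5 s (eps s) := by
    rw [← h2]; linear_combination (-s) * hnum5 hs'
  have hb : s^2 * (Real.exp (2*s) - 1) = s^3 * qq s (eps s) := by rw [← h2]; ring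
  rw [e1, ha, hb, mul_div_mul_left _ _ (pow_ne_zero 3 hs')]
  all_goals rfl

lemma K6 : Tendsto (fun s => 1/(3*s^2) - 2 * Real.exp s * (Real.exp (2*s) + 1)/(3 * (Real.exp (2*s) - 1)^2))
    (𝓝[>] (0:ℝ)) (𝓝 (-1/18)) := by
  have hn : Tendsto (fun s => num6 s (eps s)) (𝓝[>] (0:ℝ)) (𝓝 (-2/3)) := by
    have := tendsto_comp2 num6 (by unfold num6; fun_prop)
    norm_num [num6] at this ⊢
    exact this
  have h := hn.div ((tendsto_qq.pow 2).const_mul 3) (by norm_num)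
  rw [show ((-2:ℝ)/3)/(3 * 2^2) = -1/18 from by norm_num] at h
  refine Tendsto.congr' ?_ h
  filter_upwards [self_mem_nhdsWithin] with s hs
  have hs' : s ≠ 0 := ne_of_gt hs
  have hE1 : Real.exp (2*s) - 1 ≠ 0 := by have := exp2_gt_one hs; linarith
  have h2 := hq hs'
  have e1 : 1/(3*s^2) - 2 * Real.exp s * (Real.exp (2*s) + 1)/(3 * (Real.exp (2*s) - 1)^2)
      = ((Real.exp (2*s) - 1)^2 - s^2 * (2 * Real.exp s * (Real.exp (2*s) + 1)))
        /(s^2 * (3 * (Real.exp (2*s) - 1)^2)) := by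
    rw [div_sub_div _ _ (mul_ne_zero three_ne_zero (pow_ne_zero 2 hs')) (mul_ne_zero three_ne_zero (pow_ne_zero 2 hE1)), div_eq_div_iff (mul_ne_zero (mul_ne_zero three_ne_zero (pow_ne_zero 2 hs')) (mul_ne_zero three_ne_zero (pow_ne_zero 2 hE1))) (mul_ne_zero (pow_ne_zero 2 hs') (mul_ne_zero three_ne_zero (pow_ne_zero 2 hE1)))]; ring
  have ha : (Real.exp (2*s) - 1)^2 - s^2 * (2 * Real.exp s * (Real.exp (2*s) + 1))
      = s^4 * num6 s (eps s) := by
    rw [← h2]; linear_combination (-s^2) * hnum6 hs'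
  have hb : s^2 * (3 * (Real.exp (2*s) - 1)^2) = s^4 * (3 * (qq s (eps s))^2) := by rw [← h2]; ring
  rw [e1, ha, hb, mul_div_mul_left _ _ (pow_ne_zero 4 hs')]
  all_goals rfl

lemma sqrt3_pos : (0:ℝ) < Real.sqrt 3 := Real.sqrt_pos.mpr (by norm_num)
lemma sqrt3_mul_self : Real.sqrt 3 * Real.sqrt 3 = 3 := Real.mul_self_sqrt (by norm_num)

lemma E_gt_one {t : ℝ} (ht : 0 < t) : 1 < Real.exp (2 * t / Real.sqrt 3) := by
  rw [show (1:ℝ) = Real.exp 0 from (Real.exp_zero).symm]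
  exact Real.exp_lt_exp.mpr (by positivity)

lemma E_sub_ne {t : ℝ} (ht : 0 < t) : Real.exp (2 * t / Real.sqrt 3) - 1 ≠ 0 := by
  have := E_gt_one ht; linarith

lemma hasDerivAt_E (t : ℝ) : HasDerivAt (fun u : ℝ => Real.exp (2 * u / Real.sqrt 3))
    (Real.exp (2 * t / Real.sqrt 3) * (2 / Real.sqrt 3)) t := by
  have h1 : HasDerivAt (fun u : ℝ => 2 * u / Real.sqrt 3) (2 / Real.sqrt 3) t := by
    simpa using ((hasDerivAt_id t).const_mul 2).div_const (Real.sqrt 3)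
  exact (Real.hasDerivAt_exp _).comp t h1

lemma hasDerivAt_w (t : ℝ) : HasDerivAt (fun u : ℝ => Real.exp (u / Real.sqrt 3))
    (Real.exp (t / Real.sqrt 3) * (1 / Real.sqrt 3)) t := by
  have h1 : HasDerivAt (fun u : ℝ => u / Real.sqrt 3) (1 / Real.sqrt 3) t := by
    simpa using (hasDerivAt_id t).div_const (Real.sqrt 3)
  exact (Real.hasDerivAt_exp _).comp t h1

lemma hasDerivAt_xiH {t : ℝ} (ht : 0 < t) : HasDerivAt ξH (1 - 3 * (LH t)^2) t := by
  have hE := hasDerivAt_E t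
  have hne := E_sub_ne ht
  have hd := (((hE.add_const 1).const_mul (Real.sqrt 3)).div (hE.sub_const 1) hne)
  refine hd.congr_deriv ?_; symm
  unfold LH
  have h3 := sqrt3_mul_self
  have hs3 := sqrt3_pos.ne'
  field_simp
  linear_combination ((Real.exp (2*t/Real.sqrt 3) + 1)^2) * h3

lemma hasDerivAt_LH {t : ℝ} (ht : 0 < t) :
    HasDerivAt LH (1 - ξH t * LH t + 2 * (RH t)^2) t := by
  have hE := hasDerivAt_E t
  have hne := E_sub_ne ht
  have hd := (((hE.add_const 1).const_mul (1 / Real.sqrt 3)).div (hE.sub_const 1) hne)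
  refine hd.congr_deriv ?_; symm
  unfold ξH LH RH
  have h3 := sqrt3_mul_self
  have hs3 := sqrt3_pos.ne'
  have hw2 : Real.exp (t / Real.sqrt 3) * Real.exp (t / Real.sqrt 3)
      = Real.exp (2 * t / Real.sqrt 3) := by
    rw [← Real.exp_add]; congr 1; ring
  field_simp
  linear_combination 8 * hw2 + (-4*Real.exp (2*t/Real.sqrt 3)) * h3

lemma hasDerivAt_RH {t : ℝ} (ht : 0 < t) : HasDerivAt RH (-(RH t) * LH t) t := by
  have hE := hasDerivAt_E t
  have hw := hasDerivAt_w t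
  have hne := E_sub_ne ht
  have hd := ((hw.const_mul (2 / Real.sqrt 3)).div (hE.sub_const 1) hne)
  refine hd.congr_deriv ?_; symm
  unfold LH RH
  have h3 := sqrt3_mul_self
  have hs3 := sqrt3_pos.ne'
  have hw2 : Real.exp (t / Real.sqrt 3) * Real.exp (t / Real.sqrt 3)
      = Real.exp (2 * t / Real.sqrt 3) := by
    rw [← Real.exp_add]; congr 1; ring
  field_simp
  ring
lemma tendsto_scale : Tendsto (fun t : ℝ => t / Real.sqrt 3) (𝓝[>] 0) (𝓝[>] 0) := by
  rw [tendsto_nhdsWithin_iff]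
  constructor
  · have : Tendsto (fun t : ℝ => t / Real.sqrt 3) (𝓝 0) (𝓝 (0 / Real.sqrt 3)) :=
      tendsto_id.div_const _
    simpa using this.mono_left nhdsWithin_le_nhds
  · filter_upwards [self_mem_nhdsWithin] with t ht
    exact div_pos ht sqrt3_pos

lemma Tslope_xi : Tendsto (fun t => (ξH t - 3/t)/t) (𝓝[>] (0:ℝ)) (𝓝 (1/3)) := by
  have h := K1.comp tendsto_scale
  refine Tendsto.congr' ?_ h
  filter_upwards [self_mem_nhdsWithin] with t ht
  have ht' : t ≠ 0 := ne_of_gt ht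
  have hne := E_sub_ne ht
  have h3 := sqrt3_mul_self
  have hs3 := sqrt3_pos.ne'
  simp only [Function.comp]
  rw [show 2 * (t / Real.sqrt 3) = 2 * t / Real.sqrt 3 by ring]
  unfold ξH
  field_simp
  linear_combination (1 - Real.exp (2*t/Real.sqrt 3)) * h3

lemma Tslope_L : Tendsto (fun t => (LH t - 1/t)/t) (𝓝[>] (0:ℝ)) (𝓝 (1/9)) := by
  have h := (K1.comp tendsto_scale).const_mul (1/3 : ℝ)
  rw [show (1/3 : ℝ) * (1/3) = 1/9 by norm_num] at h
  refine Tendsto.congr' ?_ h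
  filter_upwards [self_mem_nhdsWithin] with t ht
  have ht' : t ≠ 0 := ne_of_gt ht
  have hne := E_sub_ne ht
  have h3 := sqrt3_mul_self
  have hs3 := sqrt3_pos.ne'
  simp only [Function.comp]
  rw [show 2 * (t / Real.sqrt 3) = 2 * t / Real.sqrt 3 by ring]
  unfold LH
  field_simp
  linear_combination (t*(Real.exp (2*t/Real.sqrt 3) + 1) - Real.sqrt 3*(Real.exp (2*t/Real.sqrt 3) - 1)) * h3

lemma Tslope_R : Tendsto (fun t => (RH t - 1/t)/t) (𝓝[>] (0:ℝ)) (𝓝 (-1/18)) := by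
  have h := (K5.comp tendsto_scale).const_mul (1/3 : ℝ)
  rw [show (1/3 : ℝ) * (-1/6) = -1/18 by norm_num] at h
  refine Tendsto.congr' ?_ h
  filter_upwards [self_mem_nhdsWithin] with t ht
  have ht' : t ≠ 0 := ne_of_gt ht
  have hne := E_sub_ne ht
  have h3 := sqrt3_mul_self
  have hs3 := sqrt3_pos.ne'
  simp only [Function.comp]
  rw [show 2 * (t / Real.sqrt 3) = 2 * t / Real.sqrt 3 by ring]
  unfold RH
  field_simp
  linear_combination (2*t*Real.exp (t/Real.sqrt 3) - Real.sqrt 3*(Real.exp (2*t/Real.sqrt 3) - 1)) * h3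

lemma Td_xi : Tendsto (fun t => 1 - 3 * (LH t)^2 + 3/t^2) (𝓝[>] (0:ℝ)) (𝓝 (1/3)) := by
  have h := (K2.comp tendsto_scale).const_add (1:ℝ)
  rw [show (1:ℝ) + (-2/3) = 1/3 by norm_num] at h
  refine Tendsto.congr' ?_ h
  filter_upwards [self_mem_nhdsWithin] with t ht
  have ht' : t ≠ 0 := ne_of_gt ht
  have hne := E_sub_ne ht
  have h3 := sqrt3_mul_self
  have hs3 := sqrt3_pos.ne'
  simp only [Function.comp]
  rw [show 2 * (t / Real.sqrt 3) = 2 * t / Real.sqrt 3 by ring]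
  unfold LH
  field_simp
  linear_combination (Real.sqrt 3^2 - t^2*(Real.exp (t*2/Real.sqrt 3) + 1)^2/(Real.exp (t*2/Real.sqrt 3) - 1)^2) * h3

lemma Td_L : Tendsto (fun t => 1 - ξH t * LH t + 2 * (RH t)^2 + 1/t^2) (𝓝[>] (0:ℝ)) (𝓝 (1/9)) := by
  have h := (K4.comp tendsto_scale).const_add (1:ℝ)
  rw [show (1:ℝ) + (-8/9) = 1/9 by norm_num] at h
  refine Tendsto.congr' ?_ h
  filter_upwards [self_mem_nhdsWithin] with t ht
  have ht' : t ≠ 0 := ne_of_gt ht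
  have hne := E_sub_ne ht
  have h3 := sqrt3_mul_self
  have hs3 := sqrt3_pos.ne'
  have hw2 : Real.exp (t / Real.sqrt 3) * Real.exp (t / Real.sqrt 3)
      = Real.exp (2 * t / Real.sqrt 3) := by
    rw [← Real.exp_add]; congr 1; ring
  simp only [Function.comp]
  rw [show 2 * (t / Real.sqrt 3) = 2 * t / Real.sqrt 3 by ring]
  unfold ξH LH RH
  field_simp
  linear_combination (8*t^2*Real.exp (2*t/Real.sqrt 3) + Real.sqrt 3^2*(Real.exp (2*t/Real.sqrt 3) - 1)^2) * h3 - 24*t^2 * hw2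

lemma Td_R : Tendsto (fun t => -(RH t) * LH t + 1/t^2) (𝓝[>] (0:ℝ)) (𝓝 (-1/18)) := by
  have h := K6.comp tendsto_scale
  refine Tendsto.congr' ?_ h
  filter_upwards [self_mem_nhdsWithin] with t ht
  have ht' : t ≠ 0 := ne_of_gt ht
  have hne := E_sub_ne ht
  have h3 := sqrt3_mul_self
  have hs3 := sqrt3_pos.ne'
  simp only [Function.comp]
  rw [show 2 * (t / Real.sqrt 3) = 2 * t / Real.sqrt 3 by ring]
  unfold RH LH
  field_simp
  linear_combination (Real.sqrt 3^2 - t^2*2*Real.exp (t/Real.sqrt 3)*(Real.exp (t*2/Real.sqrt 3) + 1)/(Real.exp (t*2/Real.sqrt 3) - 1)^2) * h3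

lemma buildBC (f d : ℝ → ℝ) (c : ℝ)
    (hf : ∀ t ∈ Ioi (0:ℝ), HasDerivAt f (d t) t)
    (hdc : ∀ t ∈ Ioi (0:ℝ), ContinuousAt d t)
    (hslope : Tendsto (fun t => f t / t) (𝓝[>] 0) (𝓝 c))
    (hdlim : Tendsto d (𝓝[>] 0) (𝓝 c)) :
    ∃ g : ℝ → ℝ, ContDiffOn ℝ 1 g (Ici 0) ∧ (∀ t ∈ Ioi (0:ℝ), g t = f t) ∧
      g 0 = 0 ∧ derivWithin g (Ici 0) 0 = c := by
  classical
  set g : ℝ → ℝ := fun t => if t = 0 then 0 else f t with hg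
  have hgf : ∀ t ∈ Ioi (0:ℝ), g t = f t := fun t ht => if_neg (ne_of_gt ht)
  have hgd : ∀ t ∈ Ioi (0:ℝ), HasDerivAt g (d t) t := by
    intro t ht
    apply (hf t ht).congr_of_eventuallyEq
    filter_upwards [Ioi_mem_nhds ht] with u hu
    exact hgf u hu
  have h0 : HasDerivWithinAt g c (Ici 0) 0 := by
    rw [hasDerivWithinAt_iff_tendsto_slope, Ici_sdiff_left]
    refine Tendsto.congr' ?_ hslope
    filter_upwards [self_mem_nhdsWithin] with t ht
    have ht' : (t:ℝ) ≠ 0 := ne_of_gt ht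
    rw [slope_def_field]
    simp [hg, ht']
  have hderivWithin0 : derivWithin g (Ici 0) 0 = c :=
    h0.derivWithin (uniqueDiffOn_Ici 0 0 self_mem_Ici)
  have hdW : ∀ t ∈ Ioi (0:ℝ), derivWithin g (Ici 0) t = d t := by
    intro t ht
    rw [derivWithin_of_mem_nhds (Ici_mem_nhds ht)]
    exact (hgd t ht).deriv
  have hdiff : DifferentiableOn ℝ g (Ici 0) := by
    intro t ht
    rcases eq_or_lt_of_le (mem_Ici.mp ht) with h|h
    · rw [← h]
      exact h0.differentiableWithinAt
    · exact (hgd t h).differentiableAt.differentiableWithinAt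
  have hcont : ContinuousOn (derivWithin g (Ici 0)) (Ici 0) := by
    intro t ht
    rcases eq_or_lt_of_le (mem_Ici.mp ht) with h|h
    · rw [← h]
      rw [← continuousWithinAt_diff_self, Ici_sdiff_left]
      unfold ContinuousWithinAt
      rw [hderivWithin0]
      refine Tendsto.congr' ?_ hdlim
      filter_upwards [self_mem_nhdsWithin] with u hu
      exact (hdW u hu).symm
    · have hev : ∀ᶠ u in 𝓝 t, d u = derivWithin g (Ici 0) u := by
        filter_upwards [Ioi_mem_nhds h] with u hu
        exact (hdW u hu).symm
      exact ((hdc t h).congr hev).continuousWithinAt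
  have hcd : ContDiffOn ℝ 1 g (Ici 0) := by
    have h1 : ContDiffOn ℝ (0 + 1) g (Ici 0) :=
      (contDiffOn_succ_iff_derivWithin (uniqueDiffOn_Ici 0)).mpr
        ⟨hdiff, by simp, (contDiffOn_zero).mpr hcont⟩
    simpa using h1
  exact ⟨g, hcd, hgf, if_pos rfl, hderivWithin0⟩
lemma contAt_xiH {t : ℝ} (ht : 0 < t) : ContinuousAt ξH t := by
  unfold ξH; exact ContinuousAt.div (by fun_prop) (by fun_prop) (E_sub_ne ht)

lemma contAt_LH {t : ℝ} (ht : 0 < t) : ContinuousAt LH t := by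
  unfold LH; exact ContinuousAt.div (by fun_prop) (by fun_prop) (E_sub_ne ht)

lemma contAt_RH {t : ℝ} (ht : 0 < t) : ContinuousAt RH t := by
  unfold RH; exact ContinuousAt.div (by fun_prop) (by fun_prop) (E_sub_ne ht)

lemma contAt_invsq {t : ℝ} (ht : 0 < t) : ContinuousAt (fun u : ℝ => 1/u^2) t :=
  ContinuousAt.div continuousAt_const (by fun_prop) (pow_ne_zero 2 (ne_of_gt ht))

lemma hasDerivAt_cdiv {t : ℝ} (ht : 0 < t) (k : ℝ) :
    HasDerivAt (fun u : ℝ => k/u) (-(k/t^2)) t := by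
  have h := (hasDerivAt_inv (ne_of_gt ht)).const_mul (k:ℝ)
  have he : (fun u:ℝ => k/u) = fun u => k * u⁻¹ := by funext u; rw [div_eq_mul_inv]
  rw [he]
  refine h.congr_deriv ?_; symm
  have : t ≠ 0 := ne_of_gt ht
  field_simp


theorem explicit_hyperbolic_solution :
    SO4System ξH LH RH ∧ SO4BC 0 ξH LH RH := by
  constructor
  · intro t ht
    exact ⟨hasDerivAt_xiH ht, hasDerivAt_RH ht, hasDerivAt_LH ht⟩
  · refine ⟨?_, ?_, ?_⟩
    · rw [show ((1:ℝ) + 2 * 0) / 3 = 1/3 by norm_num]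
      apply buildBC (fun t => ξH t - 3/t) (fun t => 1 - 3*(LH t)^2 + 3/t^2) (1/3)
      · intro t ht
        have h := (hasDerivAt_xiH ht).sub (hasDerivAt_cdiv ht 3)
        refine h.congr_deriv ?_
        ring
      · intro t ht
        have h2 : ContinuousAt (fun u : ℝ => 3/u^2) t :=
          ContinuousAt.div continuousAt_const (by fun_prop) (pow_ne_zero 2 (ne_of_gt ht))
        exact (continuousAt_const.sub (((contAt_LH ht).pow 2).const_mul 3)).add h2
      · exact Tslope_xi
      · exact Td_xi
    · rw [show ((1:ℝ) - 0) / 9 = 1/9 by norm_num]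
      apply buildBC (fun t => LH t - 1/t) (fun t => 1 - ξH t * LH t + 2*(RH t)^2 + 1/t^2) (1/9)
      · intro t ht
        have h := (hasDerivAt_LH ht).sub (hasDerivAt_cdiv ht 1)
        refine h.congr_deriv ?_
        ring
      · intro t ht
        exact ((continuousAt_const.sub ((contAt_xiH ht).mul (contAt_LH ht))).add
          (((contAt_RH ht).pow 2).const_mul 2)).add (contAt_invsq ht)
      · exact Tslope_L
      · exact Td_L
    · rw [show ((0:ℝ) - 1) / 18 = -1/18 by norm_num]
      apply buildBC (fun t => RH t - 1/t) (fun t => -(RH t) * LH t + 1/t^2) (-1/18)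
      · intro t ht
        have h := (hasDerivAt_RH ht).sub (hasDerivAt_cdiv ht 1)
        refine h.congr_deriv ?_
        ring
      · intro t ht
        exact (((contAt_RH ht).neg).mul (contAt_LH ht)).add (contAt_invsq ht)
      · exact Tslope_R
      · exact Td_R
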